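/- Let (V,*) be a magmatic algebra and x₁,…,x_k ∈ V. For a subset I = {i₁ < … < i_p} ⊆ {1,…,k} put x_I^* = (…((x_{i₁}*x_{i₂})*x_{i₃})*…)*x_{i_p} ∈ V, and for a partition P = {P₁,…,P_p} of {1,…,k} with min(P₁)<…<min(P_p), put x_P^* = x_{P₁}^* ⋯ x_{P_p}^* ∈ V^{⊗p}. Then φ_*(x₁⋯x_k) = x₁ ⊛ ⋯ ⊛ x_k = Σ_{P partition of {1,…,k}} x_P^*. -/

import Mathlib

open scoped TensorProduct

noncomputable section

variable (K V : Type*) [Field K] [AddCommGroup V] [Module K V]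

/-- The deshuffling coproduct on the tensor algebra: the unique algebra morphism
sending `x : V` to `x ⊗ 1 + 1 ⊗ x`. -/
def deshuffle : TensorAlgebra K V →ₐ[K]
    TensorAlgebra K V ⊗[K] TensorAlgebra K V :=
  TensorAlgebra.lift K
    (((TensorProduct.mk K (TensorAlgebra K V) (TensorAlgebra K V)).flip 1) ∘ₗ TensorAlgebra.ι K
      + (TensorProduct.mk K (TensorAlgebra K V) (TensorAlgebra K V) 1) ∘ₗ TensorAlgebra.ι K)

/-- The counit of the tensor algebra: the algebra morphism killing `V`. -/
def tensorCounit : TensorAlgebra K V →ₐ[K] K :=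
  TensorAlgebra.lift K (0 : V →ₗ[K] K)

variable {K V}

/-- `star` is the canonical extension to `T(V)` of the magmatic product `m` on `V`:
(i) `f*1 = f`; (ii) `1*f = ε(f)1`; (iii) `x*(fy) = (x*f)*y − x*(f*y)`;
(iv) `(fg)*h = Σ (f*h⁽¹⁾)(g*h⁽²⁾)`, and `star` restricted to `V` is `m`. -/
def IsMagExt (m : V →ₗ[K] V →ₗ[K] V)
    (star : TensorAlgebra K V →ₗ[K] TensorAlgebra K V →ₗ[K] TensorAlgebra K V) : Prop :=
  (∀ x y : V, star (TensorAlgebra.ι K x) (TensorAlgebra.ι K y) = TensorAlgebra.ι K (m x y)) ∧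
  (∀ f, star f 1 = f) ∧
  (∀ f, star 1 f = (tensorCounit K V f) • 1) ∧
  (∀ (x : V) (f : TensorAlgebra K V) (y : V),
    star (TensorAlgebra.ι K x) (f * TensorAlgebra.ι K y)
      = star (star (TensorAlgebra.ι K x) f) (TensorAlgebra.ι K y)
        - star (TensorAlgebra.ι K x) (star f (TensorAlgebra.ι K y))) ∧
  (∀ f g h, star (f * g) h
      = LinearMap.mul' K (TensorAlgebra K V)
          (TensorProduct.map (star f) (star g) (deshuffle K V h)))


/-- The product `f ⊛ g = Σ (f*g⁽¹⁾) g⁽²⁾` on `T(V)`, as a bilinear map. -/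
def circLM (star : TensorAlgebra K V →ₗ[K] TensorAlgebra K V →ₗ[K] TensorAlgebra K V) :
    TensorAlgebra K V →ₗ[K] TensorAlgebra K V →ₗ[K] TensorAlgebra K V where
  toFun f := LinearMap.mul' K (TensorAlgebra K V)
      ∘ₗ LinearMap.rTensor (TensorAlgebra K V) (star f)
      ∘ₗ (deshuffle K V).toLinearMap
  map_add' f g := by ext h; simp [LinearMap.rTensor_add]
  map_smul' c f := by ext h; simp [LinearMap.rTensor_smul]


variable {k : ℕ}

/-- `x_J^* = (…((x_{j₁}*x_{j₂})*x_{j₃})…)*x_{j_p}` for `J = {j₁ < … < j_p}`. -/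
def nestStar (m : V →ₗ[K] V →ₗ[K] V) (x : Fin k → V) (J : Finset (Fin k)) : V :=
  match J.sort (· ≤ ·) with
  | [] => 0
  | a :: l => l.foldl (fun v j => m v (x j)) (x a)

/-- The word `x_P^* = x_{P₁}^* ⋯ x_{P_p}^*` of a family of parts, the parts being
ordered by their minima. -/
def partitionWord (m : V →ₗ[K] V →ₗ[K] V) (x : Fin k → V)
    (parts : Finset (Finset (Fin k))) : TensorAlgebra K V :=
  (((List.finRange k).flatMap fun i =>
      (parts.filter fun J => J.min = (i : WithTop (Fin k))).toList).map
    fun J => TensorAlgebra.ι K (nestStar m x J)).prod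

/-- `parts` is a partition of `{1,…,k}`. -/
def IsSetPartition (parts : Finset (Finset (Fin k))) : Prop :=
  ∅ ∉ parts ∧ parts.sup id = Finset.univ ∧
    ∀ J ∈ parts, ∀ J' ∈ parts, J ≠ J' → Disjoint J J'

section Aux
variable {K V : Type*} [Field K] [AddCommGroup V] [Module K V]

lemma deshuffle_ι (x : V) :
    deshuffle K V (TensorAlgebra.ι K x)
      = TensorAlgebra.ι K x ⊗ₜ[K] 1 + 1 ⊗ₜ[K] TensorAlgebra.ι K x := by
  simp [deshuffle, TensorAlgebra.lift_ι_apply]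

lemma tensorCounit_ι (x : V) : tensorCounit K V (TensorAlgebra.ι K x) = 0 := by
  simp [tensorCounit, TensorAlgebra.lift_ι_apply]

variable {m : V →ₗ[K] V →ₗ[K] V}
  {star : TensorAlgebra K V →ₗ[K] TensorAlgebra K V →ₗ[K] TensorAlgebra K V}

lemma circ_ι (hstar : IsMagExt m star) (f : TensorAlgebra K V) (y : V) :
    circLM star f (TensorAlgebra.ι K y)
      = star f (TensorAlgebra.ι K y) + f * TensorAlgebra.ι K y := by
  simp [circLM, deshuffle_ι, hstar.2.1]

lemma star_one_ι (hstar : IsMagExt m star) (y : V) :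
    star 1 (TensorAlgebra.ι K y) = 0 := by
  rw [hstar.2.2.1, tensorCounit_ι, zero_smul]

lemma star_mul_ι (hstar : IsMagExt m star) (f g : TensorAlgebra K V) (y : V) :
    star (f * g) (TensorAlgebra.ι K y)
      = star f (TensorAlgebra.ι K y) * g + f * star g (TensorAlgebra.ι K y) := by
  rw [hstar.2.2.2.2, deshuffle_ι]
  simp [hstar.2.1]

end Aux
section Aux2
variable {K V : Type*} [Field K] [AddCommGroup V] [Module K V]
variable {m : V →ₗ[K] V →ₗ[K] V}
  {star : TensorAlgebra K V →ₗ[K] TensorAlgebra K V →ₗ[K] TensorAlgebra K V}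

lemma star_list_ι (hstar : IsMagExt m star) (y : V) :
    ∀ l : List V,
      star ((l.map (TensorAlgebra.ι K)).prod) (TensorAlgebra.ι K y)
        = ∑ j ∈ Finset.range l.length,
            (((l.set j (m (l.getD j 0) y)).map (TensorAlgebra.ι K)).prod)
  | [] => by simpa using star_one_ι hstar y
  | a :: l => by
    rw [List.map_cons, List.prod_cons, star_mul_ι hstar, hstar.1,
      star_list_ι hstar y l, Finset.mul_sum, List.length_cons,
      Finset.sum_range_succ']
    simp [List.set, add_comm]
end Aux2
section Part
variable {k : ℕ}

/-- The ordered list of blocks used in `partitionWord`. -/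
def blocksL (P : Finset (Finset (Fin k))) : List (Finset (Fin k)) :=
  (List.finRange k).flatMap fun i =>
    (P.filter fun J => J.min = (i : WithTop (Fin k))).toList

/-- Strict ordering of blocks by their minima. -/
def rMin (C D : Finset (Fin k)) : Prop := C.min < D.min

instance : IsAntisymm (Finset (Fin k)) rMin :=
  ⟨fun _ _ h h' => absurd (lt_trans h h') (lt_irrefl _)⟩

lemma finRange_bind_coe :
    (List.finRange k >>= fun a => pure (a : WithTop (Fin k)) : List (WithTop (Fin k)))
      = (List.finRange k).map (↑) := by
  show List.flatMap _ _ = _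
  induction (List.finRange k) <;> simp_all

lemma mem_blocksL {P : Finset (Finset (Fin k))} (hP : (∅ : Finset (Fin k)) ∉ P)
    {C : Finset (Fin k)} : C ∈ blocksL P ↔ C ∈ P := by
  simp only [blocksL, List.mem_flatMap, Finset.mem_toList, Finset.mem_filter,
    List.mem_finRange, true_and]
  constructor
  · rintro ⟨i, -, h, -⟩; exact h
  · intro hC
    have hne : C.Nonempty := Finset.nonempty_iff_ne_empty.2 (by rintro rfl; exact hP hC)
    obtain ⟨b, hb⟩ := Finset.min_of_nonempty hne
    exact ⟨b, by simp, hC, hb⟩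

lemma blocksL_nodup (P : Finset (Finset (Fin k))) : (blocksL P).Nodup := by
  rw [blocksL, List.nodup_flatMap]
  refine ⟨fun i _ => Finset.nodup_toList _, ?_⟩
  rw [finRange_bind_coe, List.pairwise_map]
  refine (List.pairwise_lt_finRange k).imp ?_
  intro i j hij C hC hC'
  simp only [Finset.mem_toList, Finset.mem_filter] at hC hC'
  rw [hC.2] at hC'
  exact hij.ne (by exact_mod_cast hC'.2)

lemma filter_min_subsing {P : Finset (Finset (Fin k))}
    (hd : ∀ J ∈ P, ∀ J' ∈ P, J ≠ J' → Disjoint J J') (i : Fin k)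
    {C D : Finset (Fin k)}
    (hC : C ∈ P.filter fun J => J.min = (i : WithTop (Fin k)))
    (hD : D ∈ P.filter fun J => J.min = (i : WithTop (Fin k))) : C = D := by
  simp only [Finset.mem_filter] at hC hD
  by_contra hne
  exact (Finset.disjoint_left.1 (hd _ hC.1 _ hD.1 hne) (Finset.mem_of_min hC.2))
    (Finset.mem_of_min hD.2)

lemma blocksL_sorted {P : Finset (Finset (Fin k))}
    (hd : ∀ J ∈ P, ∀ J' ∈ P, J ≠ J' → Disjoint J J') :
    (blocksL P).Pairwise rMin := by
  rw [blocksL, finRange_bind_coe, List.flatMap, List.map_map, List.pairwise_flatten]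
  constructor
  · intro l hl
    simp only [List.mem_map] at hl
    obtain ⟨i, -, rfl⟩ := hl
    exact (Finset.nodup_toList _).imp_of_mem fun {a b} ha hb hne =>
      absurd (filter_min_subsing hd i (Finset.mem_toList.1 ha) (Finset.mem_toList.1 hb)) hne
  · rw [List.pairwise_map]
    refine (List.pairwise_lt_finRange k).imp ?_
    intro i j hij C hC D hD
    simp only [Function.comp_apply, Finset.mem_toList, Finset.mem_filter] at hC hD
    rw [rMin, hC.2, hD.2]
    exact_mod_cast hij

lemma blocksL_eq {P : Finset (Finset (Fin k))} (hP : (∅ : Finset (Fin k)) ∉ P)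
    (hd : ∀ J ∈ P, ∀ J' ∈ P, J ≠ J' → Disjoint J J')
    {L : List (Finset (Fin k))} (hnd : L.Nodup) (hsort : L.Pairwise rMin)
    (hmem : ∀ C, C ∈ L ↔ C ∈ P) : blocksL P = L := by
  classical
  refine List.Perm.eq_of_pairwise' (blocksL_sorted hd) hsort
    (List.perm_of_nodup_nodup_toFinset_eq (blocksL_nodup P) hnd ?_)
  ext C
  simp [List.mem_toFinset, mem_blocksL hP, hmem]

end Part
section Part2
variable {k : ℕ}

/-- Partial partition of `{i | i < n}`. -/
def PPn (n : ℕ) (P : Finset (Finset (Fin k))) : Prop :=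
  (∅ : Finset (Fin k)) ∉ P ∧
    P.sup id = Finset.univ.filter (fun i : Fin k => (i : ℕ) < n) ∧
    ∀ J ∈ P, ∀ J' ∈ P, J ≠ J' → Disjoint J J'

/-- insert the new element `n'` into block `J` (or create `{n'}` if `J = ∅`). -/
def Fop (n' : Fin k) (P : Finset (Finset (Fin k))) (J : Finset (Fin k)) :
    Finset (Finset (Fin k)) := insert (insert n' J) (P.erase J)

lemma PPn.mem_lt {n : ℕ} {P : Finset (Finset (Fin k))} (hP : PPn n P)
    {C : Finset (Fin k)} (hC : C ∈ P) {i : Fin k} (hi : i ∈ C) : (i : ℕ) < n := by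
  have := Finset.le_sup (f := id) hC
  rw [hP.2.1] at this
  simpa using (Finset.mem_filter.1 (this hi)).2

lemma PPn.nonempty {n : ℕ} {P : Finset (Finset (Fin k))} (hP : PPn n P)
    {C : Finset (Fin k)} (hC : C ∈ P) : C.Nonempty :=
  Finset.nonempty_iff_ne_empty.2 (by rintro rfl; exact hP.1 hC)

lemma PPn.not_mem_block {n : ℕ} {P : Finset (Finset (Fin k))} (hP : PPn n P)
    (hn : n < k) {C : Finset (Fin k)} (hC : C ∈ P) : (⟨n, hn⟩ : Fin k) ∉ C :=
  fun h => lt_irrefl n (hP.mem_lt hC h)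

lemma PPn.insert_not_mem {n : ℕ} {P : Finset (Finset (Fin k))} (hP : PPn n P)
    (hn : n < k) (J : Finset (Fin k)) : insert (⟨n, hn⟩ : Fin k) J ∉ P :=
  fun h => hP.not_mem_block hn h (Finset.mem_insert_self _ _)

lemma PPn.min_insert_eq {n : ℕ} {P : Finset (Finset (Fin k))} (hP : PPn n P)
    (hn : n < k) {C : Finset (Fin k)} (hC : C ∈ P) :
    (insert (⟨n, hn⟩ : Fin k) C).min = C.min := by
  obtain ⟨b, hb⟩ := Finset.min_of_nonempty (hP.nonempty hC)
  have hbn : b < (⟨n, hn⟩ : Fin k) := by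
    have := hP.mem_lt hC (Finset.mem_of_min hb)
    exact Fin.lt_def.2 this
  apply le_antisymm
  · rw [hb]
    exact Finset.min_le (Finset.mem_insert_of_mem (Finset.mem_of_min hb))
  · refine Finset.le_min fun i hi => ?_
    rcases Finset.mem_insert.1 hi with rfl | hi
    · rw [hb]; exact_mod_cast le_of_lt hbn
    · exact Finset.min_le hi

lemma PPn.step {n : ℕ} {P : Finset (Finset (Fin k))} (hP : PPn n P) (hn : n < k)
    {J : Finset (Fin k)} (hJ : J ∈ insert (∅ : Finset (Fin k)) P) :
    PPn (n + 1) (Fop ⟨n, hn⟩ P J) := by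
  set n' : Fin k := ⟨n, hn⟩
  have hJsub : ∀ i ∈ J, (i : ℕ) < n := by
    rcases Finset.mem_insert.1 hJ with rfl | hJ'
    · simp
    · exact fun i hi => hP.mem_lt hJ' hi
  have hn'J : n' ∉ J := fun h => lt_irrefl n (hJsub _ h)
  refine ⟨?_, ?_, ?_⟩
  · intro h
    rcases Finset.mem_insert.1 h with h | h
    · exact absurd h.symm (Finset.insert_ne_empty _ _)
    · exact hP.1 (Finset.mem_of_mem_erase h)
  · ext i
    simp only [Fop, Finset.sup_insert, id, Finset.mem_union, Finset.sup_eq_union,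
      Finset.mem_filter, Finset.mem_univ, true_and, Finset.mem_sup, Finset.mem_insert]
    constructor
    · rintro (h | ⟨C, hC, hiC⟩)
      · rcases h with rfl | h
        · exact Nat.lt_succ_self n
        · exact Nat.lt_succ_of_lt (hJsub _ h)
      · exact Nat.lt_succ_of_lt (hP.mem_lt (Finset.mem_of_mem_erase hC) hiC)
    · intro hi
      rcases Nat.lt_succ_iff_lt_or_eq.1 hi with hi | hi
      · have : i ∈ P.sup id := by
          rw [hP.2.1]; simp [hi]
        obtain ⟨C, hC, hiC⟩ := Finset.mem_sup.1 this
        by_cases hCJ : C = J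
        · exact Or.inl (Or.inr (hCJ ▸ hiC))
        · exact Or.inr ⟨C, Finset.mem_erase.2 ⟨hCJ, hC⟩, hiC⟩
      · have : i = n' := Fin.ext hi
        exact Or.inl (Or.inl this)
  · have hdisjJ : ∀ C ∈ P.erase J, Disjoint (insert n' J) C := by
      intro C hC
      have hCP := Finset.mem_of_mem_erase hC
      have hCn : n' ∉ C := hP.not_mem_block hn hCP
      have : Disjoint J C := by
        rcases Finset.mem_insert.1 hJ with rfl | hJ'
        · exact Finset.disjoint_left.2 (by simp)
        · exact hP.2.2 _ hJ' _ hCP (Finset.ne_of_mem_erase hC).symm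
      rw [Finset.insert_eq]
      exact Finset.disjoint_union_left.2 ⟨Finset.disjoint_singleton_left.2 hCn, this⟩
    intro C hC D hD hne
    rcases Finset.mem_insert.1 hC with rfl | hC <;> rcases Finset.mem_insert.1 hD with rfl | hD
    · exact absurd rfl hne
    · exact hdisjJ _ hD
    · exact (hdisjJ _ hC).symm
    · exact hP.2.2 _ (Finset.mem_of_mem_erase hC) _ (Finset.mem_of_mem_erase hD) hne

end Part2
section Part3

lemma map_ite_eq_set {α : Type*} [DecidableEq α] (b' : α) :
    ∀ (l : List α), l.Nodup → ∀ (j : ℕ) (h : j < l.length),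
      (l.map fun c => if c = l[j] then b' else c) = l.set j b'
  | [], _, j, h => by simp at h
  | a :: l, hnd, 0, h => by
    simp only [List.getElem_cons_zero, List.map_cons, if_pos rfl, List.set]
    congr 1
    have hcg : ∀ c ∈ l, (if c = a then b' else c) = c := fun c hc =>
      if_neg (by rintro rfl; exact (List.nodup_cons.1 hnd).1 hc)
    rw [List.map_congr_left hcg]; exact List.map_id _
  | a :: l, hnd, j + 1, h => by
    simp only [List.getElem_cons_succ, List.map_cons, List.set]
    have ha : a ≠ l[j]'(by simpa using h) := fun e =>
      (List.nodup_cons.1 hnd).1 (e ▸ List.getElem_mem _)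
    rw [if_neg ha, map_ite_eq_set b' l (List.nodup_cons.1 hnd).2 j (by simpa using h)]

variable {k : ℕ}

lemma blocksL_Fop_mem {n : ℕ} {P : Finset (Finset (Fin k))} (hP : PPn n P) (hn : n < k)
    {B : Finset (Fin k)} (hB : B ∈ P) :
    blocksL (Fop ⟨n, hn⟩ P B)
      = (blocksL P).map fun C => if C = B then insert (⟨n, hn⟩ : Fin k) B else C := by
  set n' : Fin k := ⟨n, hn⟩ with hn'
  set B' := insert n' B with hB'
  have hQ := hP.step hn (Finset.mem_insert_of_mem hB)
  have hB'P : B' ∉ P := hP.insert_not_mem hn B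
  have hB'B : B' ≠ B := fun e => hP.not_mem_block hn hB (e ▸ Finset.mem_insert_self _ _)
  refine blocksL_eq hQ.1 hQ.2.2 ?_ ?_ ?_
  · refine (blocksL_nodup P).map_on ?_
    intro C hC D hD he
    rw [mem_blocksL hP.1] at hC hD
    by_cases h1 : C = B <;> by_cases h2 : D = B
    · rw [h1, h2]
    · rw [if_pos h1, if_neg h2] at he; exact absurd (he ▸ hD) hB'P
    · rw [if_neg h1, if_pos h2] at he; exact absurd (he.symm ▸ hC) hB'P
    · rwa [if_neg h1, if_neg h2] at he
  · rw [List.pairwise_map]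
    refine (blocksL_sorted hP.2.2).imp_of_mem ?_
    intro C D hC hD hr
    rw [mem_blocksL hP.1] at hC hD
    have key : ∀ E ∈ P, (if E = B then B' else E).min = E.min := by
      intro E hE
      by_cases hEB : E = B
      · rw [if_pos hEB, hEB, hB']; exact hP.min_insert_eq hn hB
      · rw [if_neg hEB]
    rw [rMin, key C hC, key D hD]
    exact hr
  · intro C
    simp only [List.mem_map, mem_blocksL hP.1, Fop, Finset.mem_insert, Finset.mem_erase]
    constructor
    · rintro ⟨D, hD, rfl⟩
      by_cases hDB : D = B
      · rw [if_pos hDB]; exact Or.inl rfl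
      · rw [if_neg hDB]; exact Or.inr ⟨hDB, hD⟩
    · rintro (rfl | ⟨hCB, hC⟩)
      · exact ⟨B, hB, if_pos rfl⟩
      · exact ⟨C, hC, if_neg hCB⟩

lemma blocksL_Fop_empty {n : ℕ} {P : Finset (Finset (Fin k))} (hP : PPn n P) (hn : n < k) :
    blocksL (Fop ⟨n, hn⟩ P ∅) = blocksL P ++ [{(⟨n, hn⟩ : Fin k)}] := by
  set n' : Fin k := ⟨n, hn⟩ with hn'
  have hQ := hP.step hn (Finset.mem_insert_self _ _)
  have hFop : Fop n' P ∅ = insert {n'} P := by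
    rw [Fop, Finset.erase_eq_of_notMem hP.1, Finset.insert_empty]
  refine blocksL_eq hQ.1 hQ.2.2 ?_ ?_ ?_
  · rw [List.nodup_append]
    refine ⟨blocksL_nodup P, List.nodup_singleton _, ?_⟩
    intro C hC D hD hCD
    simp only [List.mem_singleton] at hD
    rw [mem_blocksL hP.1, hCD, hD] at hC
    exact hP.not_mem_block hn hC (Finset.mem_singleton_self _)
  · rw [List.pairwise_append]
    refine ⟨blocksL_sorted hP.2.2, List.pairwise_singleton _ _, ?_⟩
    intro C hC D hD
    simp only [List.mem_singleton] at hD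
    rw [mem_blocksL hP.1] at hC
    obtain ⟨b, hb⟩ := Finset.min_of_nonempty (hP.nonempty hC)
    rw [hD, rMin, hb, Finset.min_singleton]
    exact_mod_cast Fin.lt_def.2 (hP.mem_lt hC (Finset.mem_of_min hb))
  · intro C
    rw [hFop]
    simp only [List.mem_append, mem_blocksL hP.1, List.mem_singleton, Finset.mem_insert]
    tauto

end Part3
section Nest
variable {k : ℕ}

lemma sort_insert_max {B : Finset (Fin k)} {a : Fin k} (h : ∀ b ∈ B, b < a) :
    (insert a B).sort (· ≤ ·) = B.sort (· ≤ ·) ++ [a] := by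
  have ha : a ∉ B := fun hm => lt_irrefl a (h a hm)
  refine (fun h1 h2 => List.Perm.eq_of_pairwise' (Finset.pairwise_sort _ _) h2 h1) ?_ ?_
  · refine ((Finset.sort_perm_toList _ _).trans (Finset.toList_insert ha)).trans ?_
    exact ((Finset.sort_perm_toList B (· ≤ ·)).symm.cons a).trans
      (List.perm_append_singleton a _).symm
  · rw [List.pairwise_append]
    refine ⟨Finset.pairwise_sort _ _, List.pairwise_singleton _ _, ?_⟩
    intro b hb c hc
    simp only [List.mem_singleton] at hc
    exact hc ▸ le_of_lt (h b ((Finset.mem_sort _).1 hb))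

variable {K V : Type*} [Field K] [AddCommGroup V] [Module K V]

lemma nestStar_def (m : V →ₗ[K] V →ₗ[K] V) (x : Fin k → V) (J : Finset (Fin k)) :
    nestStar m x J = match J.sort (· ≤ ·) with
      | [] => 0
      | a :: l => l.foldl (fun v j => m v (x j)) (x a) := rfl

lemma nestStar_empty (m : V →ₗ[K] V →ₗ[K] V) (x : Fin k → V) :
    nestStar m x (∅ : Finset (Fin k)) = 0 := by
  rw [nestStar_def, Finset.sort_empty]

lemma nestStar_singleton (m : V →ₗ[K] V →ₗ[K] V) (x : Fin k → V) (a : Fin k) :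
    nestStar m x ({a} : Finset (Fin k)) = x a := by
  rw [nestStar_def, Finset.sort_singleton]
  rfl

lemma nestStar_insert_max (m : V →ₗ[K] V →ₗ[K] V) (x : Fin k → V)
    {B : Finset (Fin k)} (hB : B.Nonempty) {a : Fin k} (h : ∀ b ∈ B, b < a) :
    nestStar m x (insert a B) = m (nestStar m x B) (x a) := by
  obtain ⟨c, l, hcl⟩ : ∃ c l, B.sort (· ≤ ·) = c :: l := by
    cases hsort : B.sort (· ≤ ·) with
    | nil =>
      exfalso
      have := congrArg List.length hsort
      rw [Finset.length_sort] at this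
      simp [Finset.card_eq_zero] at this
      exact Finset.not_nonempty_empty (this ▸ hB)
    | cons c l => exact ⟨c, l, rfl⟩
  rw [nestStar_def, nestStar_def, sort_insert_max h, hcl, List.cons_append]
  show (l ++ [a]).foldl (fun v j => m v (x j)) (x c)
    = m (l.foldl (fun v j => m v (x j)) (x c)) (x a)
  rw [List.foldl_append]
  rfl

end Nest
section Words
variable {K V : Type*} [Field K] [AddCommGroup V] [Module K V] {k : ℕ}

lemma list_map_sum_range {α M : Type*} [AddCommMonoid M] (g : α → M) (d : α) :
    ∀ l : List α, (l.map g).sum = ∑ j ∈ Finset.range l.length, g (l.getD j d)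
  | [] => by simp
  | a :: l => by
    rw [List.map_cons, List.sum_cons, list_map_sum_range g d l, List.length_cons,
      Finset.sum_range_succ']
    simp [add_comm]

lemma partitionWord_def (m : V →ₗ[K] V →ₗ[K] V) (x : Fin k → V)
    (P : Finset (Finset (Fin k))) :
    partitionWord m x P
      = ((blocksL P).map fun J => TensorAlgebra.ι K (nestStar m x J)).prod := rfl

lemma blocksL_toFinset {P : Finset (Finset (Fin k))} (hP : (∅ : Finset (Fin k)) ∉ P) :
    (blocksL P).toFinset = P :=
  Finset.ext fun C => by simp [List.mem_toFinset, mem_blocksL hP]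

lemma word_Fop_empty (m : V →ₗ[K] V →ₗ[K] V) (x : Fin k → V)
    {n : ℕ} {P : Finset (Finset (Fin k))} (hP : PPn n P) (hn : n < k) :
    partitionWord m x (Fop ⟨n, hn⟩ P ∅)
      = partitionWord m x P * TensorAlgebra.ι K (x ⟨n, hn⟩) := by
  rw [partitionWord_def, partitionWord_def, blocksL_Fop_empty hP hn, List.map_append,
    List.prod_append, List.map_singleton, List.prod_singleton, nestStar_singleton]

variable {m : V →ₗ[K] V →ₗ[K] V}
  {star : TensorAlgebra K V →ₗ[K] TensorAlgebra K V →ₗ[K] TensorAlgebra K V}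

lemma word_star (hstar : IsMagExt m star) (x : Fin k → V)
    {n : ℕ} {P : Finset (Finset (Fin k))} (hP : PPn n P) (hn : n < k) :
    star (partitionWord m x P) (TensorAlgebra.ι K (x ⟨n, hn⟩))
      = ∑ J ∈ P, partitionWord m x (Fop ⟨n, hn⟩ P J) := by
  classical
  set n' : Fin k := ⟨n, hn⟩ with hn'
  have hmap : (blocksL P).map (fun J => TensorAlgebra.ι K (nestStar m x J))
      = ((blocksL P).map (nestStar m x)).map (TensorAlgebra.ι K) := by
    rw [List.map_map]; rfl
  rw [partitionWord_def, hmap, star_list_ι hstar]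
  have hsum := List.sum_toFinset (fun J => partitionWord m x (Fop n' P J))
    (blocksL_nodup P)
  rw [blocksL_toFinset hP.1] at hsum
  rw [hsum, list_map_sum_range (fun J => partitionWord m x (Fop n' P J)) ∅,
    List.length_map]
  refine Finset.sum_congr rfl fun j hj => ?_
  rw [Finset.mem_range] at hj
  have hjb : j < (blocksL P).length := hj
  set B := (blocksL P)[j] with hBdef
  have hBP : B ∈ P := (mem_blocksL hP.1).1 (List.getElem_mem hjb)
  have h1 : ((blocksL P).map (nestStar m x)).getD j 0
      = nestStar m x B := by
    rw [List.getD_eq_getElem _ _ (by simpa using hjb), List.getElem_map]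
  have h2 : (blocksL P).getD j ∅ = B := List.getD_eq_getElem _ _ hjb
  rw [h1, h2]
  have hlt : ∀ b ∈ B, b < n' := fun b hb => Fin.lt_def.2 (hP.mem_lt hBP hb)
  have h3 : m (nestStar m x B) (x n') = nestStar m x (insert n' B) :=
    (nestStar_insert_max m x (hP.nonempty hBP) hlt).symm
  rw [h3, ← List.map_set, partitionWord_def, blocksL_Fop_mem hP hn hBP,
    map_ite_eq_set _ _ (blocksL_nodup P) j hjb, List.map_map]
  rfl

end Words
section Bij
variable {k : ℕ}

/-- The block of `Q` containing `n'`. -/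
def Bof (n' : Fin k) (Q : Finset (Finset (Fin k))) : Finset (Fin k) :=
  Q.sup fun C => if n' ∈ C then C else ∅

/-- Inverse of `Fop`. -/
def Gop (n' : Fin k) (Q : Finset (Finset (Fin k))) :
    (_ : Finset (Finset (Fin k))) × Finset (Fin k) :=
  ⟨(insert ((Bof n' Q).erase n') (Q.erase (Bof n' Q))).erase ∅, (Bof n' Q).erase n'⟩

lemma Bof_eq {n' : Fin k} {Q : Finset (Finset (Fin k))}
    (hd : ∀ J ∈ Q, ∀ J' ∈ Q, J ≠ J' → Disjoint J J')
    {B : Finset (Fin k)} (hB : B ∈ Q) (hn' : n' ∈ B) : Bof n' Q = B := by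
  apply le_antisymm
  · refine Finset.sup_le fun C hC => ?_
    by_cases h : n' ∈ C
    · rw [if_pos h]
      by_cases hCB : C = B
      · exact le_of_eq hCB
      · exact absurd hn' (Finset.disjoint_left.1 (hd _ hC _ hB hCB) h)
    · rw [if_neg h]; exact Finset.empty_subset _
  · have h1 : B ≤ (if n' ∈ B then B else ∅) := le_of_eq (if_pos hn').symm
    exact le_trans h1 (Finset.le_sup (f := fun C => if n' ∈ C then C else ∅) hB)

lemma exists_block {n : ℕ} {Q : Finset (Finset (Fin k))} (hQ : PPn (n + 1) Q)
    (hn : n < k) : ∃ B ∈ Q, (⟨n, hn⟩ : Fin k) ∈ B := by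
  have : (⟨n, hn⟩ : Fin k) ∈ Q.sup id := by
    rw [hQ.2.1]; simp
  obtain ⟨B, hB, hb⟩ := Finset.mem_sup.1 this
  exact ⟨B, hB, hb⟩

lemma Gop_Fop {n : ℕ} {P : Finset (Finset (Fin k))} (hP : PPn n P) (hn : n < k)
    {J : Finset (Fin k)} (hJ : J ∈ insert (∅ : Finset (Fin k)) P) :
    Gop ⟨n, hn⟩ (Fop ⟨n, hn⟩ P J) = ⟨P, J⟩ := by
  set n' : Fin k := ⟨n, hn⟩ with hn'
  have hQ := hP.step hn hJ
  have hn'J : n' ∉ J := by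
    rcases Finset.mem_insert.1 hJ with rfl | hJ'
    · simp
    · exact hP.not_mem_block hn hJ'
  have hBof : Bof n' (Fop n' P J) = insert n' J :=
    Bof_eq hQ.2.2 (Finset.mem_insert_self _ _) (Finset.mem_insert_self _ _)
  have hJ' : (insert n' J).erase n' = J := Finset.erase_insert hn'J
  have hBJ : insert n' J ∉ P.erase J := fun h =>
    hP.insert_not_mem hn J (Finset.mem_of_mem_erase h)
  have hP' : (Fop n' P J).erase (insert n' J) = P.erase J := by
    rw [Fop, Finset.erase_insert hBJ]
  rw [Gop, hBof, hJ', hP']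
  congr 1
  rcases Finset.mem_insert.1 hJ with rfl | hJmem
  · rw [Finset.erase_eq_of_notMem hP.1, Finset.erase_insert hP.1]
  · rw [Finset.insert_erase hJmem, Finset.erase_eq_of_notMem hP.1]

lemma Gop_spec {n : ℕ} {Q : Finset (Finset (Fin k))} (hQ : PPn (n + 1) Q) (hn : n < k) :
    PPn n (Gop ⟨n, hn⟩ Q).1 ∧ (Gop ⟨n, hn⟩ Q).2 ∈ insert ∅ (Gop ⟨n, hn⟩ Q).1 ∧
      Fop ⟨n, hn⟩ (Gop ⟨n, hn⟩ Q).1 (Gop ⟨n, hn⟩ Q).2 = Q := by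
  set n' : Fin k := ⟨n, hn⟩ with hn'
  obtain ⟨B, hB, hn'B⟩ := exists_block hQ hn
  have hBof : Bof n' Q = B := Bof_eq hQ.2.2 hB hn'B
  set J : Finset (Fin k) := B.erase n' with hJ
  have hGop1 : (Gop n' Q).1 = (insert J (Q.erase B)).erase ∅ := by rw [Gop, hBof]
  have hGop2 : (Gop n' Q).2 = J := by rw [Gop, hBof]
  have hul : ∀ C ∈ Q.erase B, ∀ i ∈ C, (i : ℕ) < n := by
    intro C hC i hi
    have hlt := hQ.mem_lt (Finset.mem_of_mem_erase hC) hi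
    have : i ≠ n' := by
      rintro rfl
      exact (Finset.disjoint_left.1
        (hQ.2.2 _ (Finset.mem_of_mem_erase hC) _ hB (Finset.ne_of_mem_erase hC)) hi) hn'B
    have h3 : (i : ℕ) ≠ n := fun e => this (Fin.ext e)
    omega
  have hJl : ∀ i ∈ J, (i : ℕ) < n := by
    intro i hi
    have h1 := hQ.mem_lt hB (Finset.mem_of_mem_erase hi)
    have h2 : i ≠ n' := Finset.ne_of_mem_erase hi
    have h3 : (i : ℕ) ≠ n := fun e => h2 (Fin.ext e)
    omega
  have hmemP : ∀ C, C ∈ (Gop n' Q).1 ↔ (C ≠ ∅ ∧ (C = J ∨ C ∈ Q.erase B)) := by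
    intro C
    rw [hGop1]
    simp [Finset.mem_erase, Finset.mem_insert]
  have hPP : PPn n (Gop n' Q).1 := by
    refine ⟨?_, ?_, ?_⟩
    · intro h; exact ((hmemP ∅).1 h).1 rfl
    · ext i
      simp only [Finset.mem_sup, id, Finset.mem_filter, Finset.mem_univ, true_and]
      constructor
      · rintro ⟨C, hC, hiC⟩
        rcases ((hmemP C).1 hC).2 with rfl | hC'
        · exact hJl i hiC
        · exact hul C hC' i hiC
      · intro hi
        have : i ∈ Q.sup id := by rw [hQ.2.1]; simp; omega
        obtain ⟨C, hC, hiC⟩ := Finset.mem_sup.1 this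
        by_cases hCB : C = B
        · refine ⟨J, (hmemP J).2 ⟨?_, Or.inl rfl⟩, ?_⟩
          · apply Finset.nonempty_iff_ne_empty.1
            exact ⟨i, Finset.mem_erase.2 ⟨fun e => absurd (congrArg Fin.val e) (by simp [n']; omega),
              hCB ▸ hiC⟩⟩
          · exact Finset.mem_erase.2 ⟨fun e => absurd (congrArg Fin.val e) (by simp [n']; omega),
              hCB ▸ hiC⟩
        · refine ⟨C, (hmemP C).2 ⟨?_, Or.inr (Finset.mem_erase.2 ⟨hCB, hC⟩)⟩, hiC⟩
          exact Finset.nonempty_iff_ne_empty.1 ⟨i, hiC⟩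
    · intro C hC D hD hne
      have hC' := ((hmemP C).1 hC).2
      have hD' := ((hmemP D).1 hD).2
      have hJB : J ⊆ B := Finset.erase_subset _ _
      rcases hC' with rfl | hC' <;> rcases hD' with rfl | hD'
      · exact absurd rfl hne
      · exact Finset.disjoint_of_subset_left hJB
          (hQ.2.2 _ hB _ (Finset.mem_of_mem_erase hD') (Finset.ne_of_mem_erase hD').symm)
      · exact Finset.disjoint_of_subset_right hJB
          (hQ.2.2 _ (Finset.mem_of_mem_erase hC') _ hB (Finset.ne_of_mem_erase hC'))
      · exact hQ.2.2 _ (Finset.mem_of_mem_erase hC') _ (Finset.mem_of_mem_erase hD') hne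
  refine ⟨hPP, ?_, ?_⟩
  · rw [hGop2]
    by_cases hJe : J = ∅
    · rw [hJe]; exact Finset.mem_insert_self _ _
    · exact Finset.mem_insert_of_mem ((hmemP J).2 ⟨hJe, Or.inl rfl⟩)
  · rw [hGop1, hGop2, Fop]
    have hBJ : insert n' J = B := by rw [hJ, Finset.insert_erase hn'B]
    have hPeJ : ((insert J (Q.erase B)).erase ∅).erase J = Q.erase B := by
      have hQe : (∅ : Finset (Fin k)) ∉ Q.erase B := fun h =>
        hQ.1 (Finset.mem_of_mem_erase h)
      by_cases hJe : J = ∅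
      · rw [hJe, Finset.erase_insert hQe, Finset.erase_eq_of_notMem hQe]
      · have hJQ : J ∉ Q.erase B := by
          intro h
          have hJQ' := Finset.mem_of_mem_erase h
          have hJneB : J ≠ B := Finset.ne_of_mem_erase h
          have hdisj := hQ.2.2 _ hJQ' _ hB hJneB
          obtain ⟨i, hi⟩ := Finset.nonempty_iff_ne_empty.2 hJe
          exact (Finset.disjoint_left.1 hdisj hi) (Finset.mem_of_mem_erase hi)
        have hne : (∅ : Finset (Fin k)) ∉ insert J (Q.erase B) := by
          intro h
          rcases Finset.mem_insert.1 h with h' | h'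
          · exact hJe h'.symm
          · exact hQe h'
        rw [Finset.erase_eq_of_notMem hne, Finset.erase_insert hJQ]
    rw [hPeJ, hBJ, Finset.insert_erase hB]

end Bij
section Main
variable {K V : Type*} [Field K] [AddCommGroup V] [Module K V] {k : ℕ}
variable {m : V →ₗ[K] V →ₗ[K] V}
  {star : TensorAlgebra K V →ₗ[K] TensorAlgebra K V →ₗ[K] TensorAlgebra K V}

open Classical in
lemma base_sum (m : V →ₗ[K] V →ₗ[K] V) (x : Fin k → V) :
    ∑ P ∈ Finset.univ.filter (fun P : Finset (Finset (Fin k)) => PPn 0 P),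
      partitionWord m x P = 1 := by
  have h0 : Finset.univ.filter (fun P : Finset (Finset (Fin k)) => PPn 0 P) = {∅} := by
    ext P
    simp only [Finset.mem_filter, Finset.mem_univ, true_and, Finset.mem_singleton]
    constructor
    · intro hP
      by_contra hne
      obtain ⟨J, hJ⟩ := Finset.nonempty_iff_ne_empty.2 hne
      have := Finset.le_sup (f := id) hJ
      rw [hP.2.1] at this
      have hJ0 : J = ∅ := by
        refine Finset.eq_empty_of_forall_notMem fun i hi => ?_
        have := this hi
        simp at this
      exact hP.1 (hJ0 ▸ hJ)
    · rintro rfl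
      refine ⟨Finset.notMem_empty _, ?_, ?_⟩
      · ext i; simp
      · intro J hJ; exact absurd hJ (Finset.notMem_empty _)
  rw [h0, Finset.sum_singleton, partitionWord_def]
  have hb : blocksL (∅ : Finset (Finset (Fin k))) = [] := by
    rw [blocksL]
    simp
  rw [hb]
  rfl

open Classical in
lemma step_sum (hstar : IsMagExt m star) (x : Fin k → V) {n : ℕ} (hn : n < k) :
    circLM star
        (∑ P ∈ Finset.univ.filter (fun P : Finset (Finset (Fin k)) => PPn n P),
          partitionWord m x P)
        (TensorAlgebra.ι K (x ⟨n, hn⟩))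
      = ∑ Q ∈ Finset.univ.filter (fun Q : Finset (Finset (Fin k)) => PPn (n + 1) Q),
          partitionWord m x Q := by
  set n' : Fin k := ⟨n, hn⟩ with hn'
  rw [map_sum, LinearMap.coe_sum, Finset.sum_apply]
  have h1 : ∀ P ∈ Finset.univ.filter (fun P : Finset (Finset (Fin k)) => PPn n P),
      circLM star (partitionWord m x P) (TensorAlgebra.ι K (x n'))
        = ∑ J ∈ insert (∅ : Finset (Fin k)) P, partitionWord m x (Fop n' P J) := by
    intro P hPm
    have hP : PPn n P := (Finset.mem_filter.1 hPm).2
    rw [circ_ι hstar, word_star hstar x hP hn, Finset.sum_insert hP.1,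
      word_Fop_empty m x hP hn, add_comm]
  rw [Finset.sum_congr rfl h1, Finset.sum_sigma']
  refine Finset.sum_nbij' (fun σ => Fop n' σ.1 σ.2) (fun Q => ⟨(Gop n' Q).1, (Gop n' Q).2⟩)
    ?_ ?_ ?_ ?_ ?_
  · rintro ⟨P, J⟩ hσ
    rw [Finset.mem_sigma] at hσ
    have hP : PPn n P := (Finset.mem_filter.1 hσ.1).2
    simp only [Finset.mem_filter, Finset.mem_univ, true_and]
    exact hP.step hn hσ.2
  · intro Q hQm
    have hQ : PPn (n + 1) Q := (Finset.mem_filter.1 hQm).2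
    obtain ⟨hP, hJ, -⟩ := Gop_spec hQ hn
    rw [Finset.mem_sigma]
    exact ⟨Finset.mem_filter.2 ⟨Finset.mem_univ _, hP⟩, hJ⟩
  · rintro ⟨P, J⟩ hσ
    rw [Finset.mem_sigma] at hσ
    have hP : PPn n P := (Finset.mem_filter.1 hσ.1).2
    exact Gop_Fop hP hn hσ.2
  · intro Q hQm
    have hQ : PPn (n + 1) Q := (Finset.mem_filter.1 hQm).2
    exact (Gop_spec hQ hn).2.2
  · rintro ⟨P, J⟩ _
    rfl

open Classical in
lemma A_formula (hstar : IsMagExt m star) (x : Fin k → V) (A : ℕ → TensorAlgebra K V)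
    (hA0 : A 0 = 1)
    (hAs : ∀ j (h : j < k), A (j + 1) = circLM star (A j) (TensorAlgebra.ι K (x ⟨j, h⟩))) :
    ∀ n, n ≤ k →
      A n = ∑ P ∈ Finset.univ.filter (fun P : Finset (Finset (Fin k)) => PPn n P),
        partitionWord m x P
  | 0, _ => by rw [hA0, base_sum]
  | n + 1, h => by
    have hn : n < k := Nat.lt_of_succ_le h
    rw [hAs n hn, A_formula hstar x A hA0 hAs n (le_of_lt hn), step_sum hstar x hn]

end Main
open Classical in
/-- `φ_*(x₁⋯x_k) = x₁ ⊛ ⋯ ⊛ x_k = Σ_{P partition of [k]} x_P^*`. -/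
theorem phi_star_partition_formula (m : V →ₗ[K] V →ₗ[K] V)
    (star : TensorAlgebra K V →ₗ[K] TensorAlgebra K V →ₗ[K] TensorAlgebra K V)
    (hstar : IsMagExt m star)
    (φ : TensorAlgebra K V →ₗ[K] TensorAlgebra K V)
    (hφ1 : φ 1 = 1)
    (hφι : ∀ x : V, φ (TensorAlgebra.ι K x) = TensorAlgebra.ι K x)
    (hφm : ∀ f g : TensorAlgebra K V, φ (f * g) = circLM star (φ f) (φ g))
    (x : Fin k → V) :
    (φ ((List.ofFn fun i => TensorAlgebra.ι K (x i)).prod)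
        = ∑ parts ∈ Finset.univ.filter (fun parts => IsSetPartition parts),
            partitionWord m x parts) ∧
    ((List.ofFn fun i => TensorAlgebra.ι K (x i)).foldl (fun acc y => circLM star acc y) 1
        = ∑ parts ∈ Finset.univ.filter (fun parts => IsSetPartition parts),
            partitionWord m x parts) := by
  classical
  have hfilter : (Finset.univ.filter fun parts : Finset (Finset (Fin k)) =>
        IsSetPartition parts)
      = Finset.univ.filter (fun P : Finset (Finset (Fin k)) => PPn k P) := by
    refine Finset.filter_congr fun P _ => ?_
    have huniv : (Finset.univ.filter fun i : Fin k => (i : ℕ) < k) = Finset.univ :=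
      Finset.filter_true_of_mem fun i _ => i.isLt
    rw [IsSetPartition, PPn, huniv]
  set L := List.ofFn fun i => TensorAlgebra.ι K (x i) with hL
  have hlen : L.length = k := List.length_ofFn
  have htakeL : L.take k = L := by rw [← hlen]; exact List.take_length
  have htake : ∀ (j : ℕ) (h : j < k),
      L.take (j + 1) = L.take j ++ [TensorAlgebra.ι K (x ⟨j, h⟩)] := by
    intro j h
    rw [List.take_succ]
    congr 1
    rw [hL, List.getElem?_ofFn]
    simp [List.ofFnNthVal, h]
  constructor
  · have hrec := A_formula hstar x (fun n => φ ((L.take n).prod))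
      (by simp [hφ1])
      (fun j h => by
        rw [htake j h, List.prod_append, List.prod_singleton, hφm, hφι])
      k le_rfl
    simp only [htakeL] at hrec
    rw [hfilter]
    exact hrec
  · have hrec := A_formula hstar x
      (fun n => (L.take n).foldl (fun acc y => circLM star acc y) 1)
      (by simp)
      (fun j h => by
        rw [htake j h, List.foldl_append, List.foldl_cons, List.foldl_nil])
      k le_rfl
    simp only [htakeL] at hrec
    rw [hfilter]
    exact hrec

end
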